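/- Assume 0 < E[X₂²] < ∞ and assumption (A1). Then there exist c₉>0 and s_*>0 such that, for all λ∈(1/2,1) and all θ₁ with 0<|θ₁|≤s_*, | b̃_λ(θ₁)/√(ã_λ²(θ₁)+b̃_λ²(θ₁)) − λc₂|θ₁|^α(θ₁/|θ₁|)/(√2·Q_λ(|θ₁|^α)) | ≤ c₉|θ₁|^ε, where Q_λ(s) = { (1−λ+λc₁s)² + (λc₂s)² + (1−λ+λc₁s)√((1−λ+λc₁s)²+(λc₂s)²) }^{1/2}. -/

import Mathlib

set_option maxHeartbeats 1600000


open MeasureTheory ProbabilityTheory Filter Set Asymptotics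

noncomputable section

variable {Ω : Type*} [MeasurableSpace Ω]

/-- `E[X₂²]`. -/
def EX2sq (P : Measure Ω) (X : ℕ → Ω → ℤ × ℤ) : ℝ := ∫ ω, ((X 0 ω).2 : ℝ) ^ 2 ∂P

/-- `E[cos (θ X₁)]`. -/
def EcosX1 (P : Measure Ω) (X : ℕ → Ω → ℤ × ℤ) (θ : ℝ) : ℝ :=
  ∫ ω, Real.cos (θ * ((X 0 ω).1 : ℝ)) ∂P

/-- `E[sin (θ X₁)]`. -/
def EsinX1 (P : Measure Ω) (X : ℕ → Ω → ℤ × ℤ) (θ : ℝ) : ℝ :=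
  ∫ ω, Real.sin (θ * ((X 0 ω).1 : ℝ)) ∂P

/-- `E[(sin (θ X₁)) X₂]`. -/
def EsinX1X2 (P : Measure Ω) (X : ℕ → Ω → ℤ × ℤ) (θ : ℝ) : ℝ :=
  ∫ ω, Real.sin (θ * ((X 0 ω).1 : ℝ)) * ((X 0 ω).2 : ℝ) ∂P

/-- `E[(-1 + cos (θ X₁)) X₂]`. -/
def Ecosm1X2 (P : Measure Ω) (X : ℕ → Ω → ℤ × ℤ) (θ : ℝ) : ℝ :=
  ∫ ω, (-1 + Real.cos (θ * ((X 0 ω).1 : ℝ))) * ((X 0 ω).2 : ℝ) ∂P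

/-- The function `B(θ₁)` of the paper. -/
def Bfun (P : Measure Ω) (X : ℕ → Ω → ℤ × ℤ) (θ : ℝ) : ℝ :=
  1 - EcosX1 P X θ - EsinX1X2 P X θ ^ 2 / (2 * EX2sq P X)
    + Ecosm1X2 P X θ ^ 2 / (2 * EX2sq P X)

/-- The function `D(θ₁)` of the paper. -/
def Dfun (P : Measure Ω) (X : ℕ → Ω → ℤ × ℤ) (θ : ℝ) : ℝ :=
  EsinX1 P X θ - EsinX1X2 P X θ * Ecosm1X2 P X θ / EX2sq P X

/-- `A = E[(sin θ₁X₁)X₂] / ((1/2)E[X₂²])`. -/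
def Acoef (P : Measure Ω) (X : ℕ → Ω → ℤ × ℤ) (θ : ℝ) : ℝ :=
  EsinX1X2 P X θ / ((1 / 2) * EX2sq P X)

/-- `B = (1 - λE[cos θ₁X₁]) / ((λ/2)E[X₂²])`. -/
def Bcoef (P : Measure Ω) (X : ℕ → Ω → ℤ × ℤ) (lam θ : ℝ) : ℝ :=
  (1 - lam * EcosX1 P X θ) / ((lam / 2) * EX2sq P X)

/-- `C = E[(-1 + cos θ₁X₁)X₂] / ((1/2)E[X₂²])`. -/
def Ccoef (P : Measure Ω) (X : ℕ → Ω → ℤ × ℤ) (θ : ℝ) : ℝ :=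
  Ecosm1X2 P X θ / ((1 / 2) * EX2sq P X)

/-- `D = E[sin θ₁X₁] / ((1/2)E[X₂²])`. -/
def Dcoef (P : Measure Ω) (X : ℕ → Ω → ℤ × ℤ) (θ : ℝ) : ℝ :=
  EsinX1 P X θ / ((1 / 2) * EX2sq P X)

/-- `K = (4B - A² + C²)² + 4(2D - AC)²`. -/
def Kcoef (P : Measure Ω) (X : ℕ → Ω → ℤ × ℤ) (lam θ : ℝ) : ℝ :=
  (4 * Bcoef P X lam θ - Acoef P X θ ^ 2 + Ccoef P X θ ^ 2) ^ 2
    + 4 * (2 * Dcoef P X θ - Acoef P X θ * Ccoef P X θ) ^ 2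

/-- `ã_λ(θ₁) = (√2/(λE[X₂²]√K))·√(4B - A² + C² + √K)`. -/
def atil (P : Measure Ω) (X : ℕ → Ω → ℤ × ℤ) (lam θ : ℝ) : ℝ :=
  Real.sqrt 2 / (lam * EX2sq P X * Real.sqrt (Kcoef P X lam θ)) *
    Real.sqrt (4 * Bcoef P X lam θ - Acoef P X θ ^ 2 + Ccoef P X θ ^ 2
      + Real.sqrt (Kcoef P X lam θ))

/-- `b̃_λ(θ₁) = (√2/(λE[X₂²]√K))·2(2D - AC)/√(4B - A² + C² + √K)`. -/
def btil (P : Measure Ω) (X : ℕ → Ω → ℤ × ℤ) (lam θ : ℝ) : ℝ :=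
  Real.sqrt 2 / (lam * EX2sq P X * Real.sqrt (Kcoef P X lam θ)) *
    (2 * (2 * Dcoef P X θ - Acoef P X θ * Ccoef P X θ) /
      Real.sqrt (4 * Bcoef P X lam θ - Acoef P X θ ^ 2 + Ccoef P X θ ^ 2
        + Real.sqrt (Kcoef P X lam θ)))

/-- `Q_λ(s)` of the paper. -/
def Qlam (c₁ c₂ lam s : ℝ) : ℝ :=
  Real.sqrt ((1 - lam + lam * c₁ * s) ^ 2 + (lam * c₂ * s) ^ 2
    + (1 - lam + lam * c₁ * s) *
      Real.sqrt ((1 - lam + lam * c₁ * s) ^ 2 + (lam * c₂ * s) ^ 2))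


def Ffun (β m : ℝ) : ℝ :=
  m / (Real.sqrt 2 * Real.sqrt (Real.sqrt (β ^ 2 + m ^ 2) * (Real.sqrt (β ^ 2 + m ^ 2) + β)))

lemma sqrt_ge_left' (β m : ℝ) (hβ : 0 ≤ β) : β ≤ Real.sqrt (β ^ 2 + m ^ 2) := by
  nlinarith [Real.sq_sqrt (show (0:ℝ) ≤ β ^ 2 + m ^ 2 by positivity),
    Real.sqrt_nonneg (β ^ 2 + m ^ 2), sq_nonneg m]

lemma sqrt_ge_abs_right (β m : ℝ) : |m| ≤ Real.sqrt (β ^ 2 + m ^ 2) := by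
  rw [← Real.sqrt_sq_eq_abs]
  exact Real.sqrt_le_sqrt (by nlinarith [sq_nonneg β])

lemma sqrt_ge_left (β m : ℝ) (hβ : 0 ≤ β) : β ≤ Real.sqrt (β ^ 2 + m ^ 2) := by
  nlinarith [Real.sq_sqrt (show (0:ℝ) ≤ β ^ 2 + m ^ 2 by positivity),
    Real.sqrt_nonneg (β ^ 2 + m ^ 2), sq_nonneg m]

lemma Ffun_lip (β β' m m' μ Δ : ℝ) (hβ : 0 < β) (hβ' : 0 < β') (hμ : 0 < μ)
    (hm : μ ≤ |m|) (hm' : μ ≤ |m'|) (hβd : |β - β'| ≤ Δ) (hmd : |m - m'| ≤ Δ)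
    (hΔ : Δ ≤ μ) :
    |Ffun β m - Ffun β' m'| ≤ 9 * Δ / μ := by
  have hΔ0 : 0 ≤ Δ := le_trans (abs_nonneg _) hβd
  set r := Real.sqrt (β ^ 2 + m ^ 2) with hrdef
  set r' := Real.sqrt (β' ^ 2 + m' ^ 2) with hrdef'
  have hr2 : r ^ 2 = β ^ 2 + m ^ 2 := Real.sq_sqrt (by positivity)
  have hr2' : r' ^ 2 = β' ^ 2 + m' ^ 2 := Real.sq_sqrt (by positivity)
  have hrm : |m| ≤ r := sqrt_ge_abs_right β m
  have hrm' : |m'| ≤ r' := sqrt_ge_abs_right β' m'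
  have hrβ : β ≤ r := sqrt_ge_left β m hβ.le
  have hrβ' : β' ≤ r' := sqrt_ge_left β' m' hβ'.le
  have hrμ : μ ≤ r := le_trans hm hrm
  have hrμ' : μ ≤ r' := le_trans hm' hrm'
  have hr0 : 0 < r := lt_of_lt_of_le hμ hrμ
  have hr0' : 0 < r' := lt_of_lt_of_le hμ hrμ'
  -- |r^2 - r'^2| bound
  have h1 : |r ^ 2 - r' ^ 2| ≤ 2 * Δ * (r + r') := by
    have hd : r ^ 2 - r' ^ 2 = (β - β') * (β + β') + (m - m') * (m + m') := by
      rw [hr2, hr2']; ring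
    calc |r ^ 2 - r' ^ 2| ≤ |(β - β') * (β + β')| + |(m - m') * (m + m')| := by
          rw [hd]; exact abs_add_le _ _
      _ = |β - β'| * (β + β') + |m - m'| * |m + m'| := by
          rw [abs_mul, abs_mul, abs_of_pos (show (0:ℝ) < β + β' by linarith)]
      _ ≤ Δ * (r + r') + Δ * (r + r') := by
          have h3 : |m + m'| ≤ r + r' :=
            le_trans (abs_add_le m m') (add_le_add hrm hrm')
          exact add_le_add (mul_le_mul hβd (by linarith) (by linarith) hΔ0)
            (mul_le_mul hmd h3 (abs_nonneg _) hΔ0)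
      _ = 2 * Δ * (r + r') := by ring
  -- |r - r'| ≤ 2Δ
  have hrr' : |r - r'| ≤ 2 * Δ := by
    have heq : |r - r'| * (r + r') = |r ^ 2 - r' ^ 2| := by
      rw [show r ^ 2 - r' ^ 2 = (r - r') * (r + r') by ring, abs_mul,
        abs_of_pos (by linarith : (0:ℝ) < r + r')]
    have := h1
    rw [← heq] at this
    exact le_of_mul_le_mul_right (by linarith) (by linarith : (0:ℝ) < r + r')
  have hr'3 : r' ≤ 3 * r := by
    have h2 := (abs_le.mp hrr').2
    have h3 := (abs_le.mp hrr').1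
    linarith [hrμ]
  set G := Real.sqrt (r * (r + β)) with hGdef
  set G' := Real.sqrt (r' * (r' + β')) with hGdef'
  have hG2 : G ^ 2 = r * (r + β) := Real.sq_sqrt (by positivity)
  have hG2' : G' ^ 2 = r' * (r' + β') := Real.sq_sqrt (by positivity)
  have hGr : r ≤ G := by
    have h := Real.sqrt_le_sqrt (show r ^ 2 ≤ r * (r + β) by nlinarith)
    rwa [Real.sqrt_sq hr0.le] at h
  have hGr' : r' ≤ G' := by
    have h := Real.sqrt_le_sqrt (show r' ^ 2 ≤ r' * (r' + β') by nlinarith)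
    rwa [Real.sqrt_sq hr0'.le] at h
  have hG0 : 0 < G := lt_of_lt_of_le hr0 hGr
  have hG0' : 0 < G' := lt_of_lt_of_le hr0' hGr'
  have hGμ : μ * (r + β) ≤ G ^ 2 := by
    rw [hG2]; exact mul_le_mul_of_nonneg_right hrμ (by linarith)
  -- |G'^2 - G^2| bound
  have hGsq : |G' ^ 2 - G ^ 2| ≤ 11 * Δ * (r + β) := by
    have hd : G' ^ 2 - G ^ 2 = (r' ^ 2 - r ^ 2) + (r' - r) * β' + r * (β' - β) := by
      rw [hG2, hG2']; ring
    have b1 : |r' ^ 2 - r ^ 2| ≤ 2 * Δ * (r + r') := by rw [abs_sub_comm]; exact h1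
    have b2 : |r' - r| ≤ 2 * Δ := by rw [abs_sub_comm]; exact hrr'
    have b3 : |β' - β| ≤ Δ := by rw [abs_sub_comm]; exact hβd
    have hβ'le : β' ≤ β + Δ := by have := (abs_le.mp hβd).1; linarith
    calc |G' ^ 2 - G ^ 2| ≤ |r' ^ 2 - r ^ 2| + |(r' - r) * β'| + |r * (β' - β)| := by
          rw [hd]; exact le_trans (abs_add_le _ _) (by gcongr; exact abs_add_le _ _)
      _ = |r' ^ 2 - r ^ 2| + |r' - r| * β' + r * |β' - β| := by
          rw [abs_mul, abs_mul, abs_of_pos hβ', abs_of_pos hr0]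
      _ ≤ 2 * Δ * (r + r') + 2 * Δ * β' + r * Δ := by gcongr
      _ ≤ 11 * Δ * (r + β) := by
          have p1 : Δ * r' ≤ Δ * (3 * r) := mul_le_mul_of_nonneg_left hr'3 hΔ0
          have p2 : Δ * β' ≤ Δ * (β + Δ) := mul_le_mul_of_nonneg_left hβ'le hΔ0
          have p3 : Δ * Δ ≤ Δ * r := mul_le_mul_of_nonneg_left (hΔ.trans hrμ) hΔ0
          have p4 : 0 ≤ Δ * β := mul_nonneg hΔ0 hβ.le
          nlinarith [p1, p2, p3, p4]
  have hGG' : |G' - G| * (G + G') ≤ 11 * Δ * (r + β) := by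
    have heq : |G' - G| * (G + G') = |G' ^ 2 - G ^ 2| := by
      rw [show G' ^ 2 - G ^ 2 = (G' - G) * (G + G') by ring, abs_mul,
        abs_of_pos (by linarith : (0:ℝ) < G + G')]
    rw [heq]; exact hGsq
  -- final
  have hs2 : (0:ℝ) < Real.sqrt 2 := by positivity
  have hF : Ffun β m - Ffun β' m' =
      (m - m') / (Real.sqrt 2 * G) + m' * (G' - G) / (Real.sqrt 2 * (G * G')) := by
    rw [Ffun, Ffun, ← hrdef, ← hrdef', ← hGdef, ← hGdef']
    field_simp
    ring
  have hT1 : |(m - m') / (Real.sqrt 2 * G)| ≤ Δ / (Real.sqrt 2 * μ) := by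
    rw [abs_div, abs_of_pos (mul_pos hs2 hG0)]
    exact div_le_div₀ hΔ0 hmd (mul_pos hs2 hμ)
      (mul_le_mul_of_nonneg_left (le_trans hrμ hGr) hs2.le)
  have hT2 : |m' * (G' - G) / (Real.sqrt 2 * (G * G'))| ≤ 11 * Δ / (Real.sqrt 2 * μ) := by
    rw [abs_div, abs_mul, abs_of_pos (mul_pos hs2 (mul_pos hG0 hG0'))]
    rw [div_le_div_iff₀ (mul_pos hs2 (mul_pos hG0 hG0')) (mul_pos hs2 hμ)]
    have hm'G : |m'| ≤ G' := le_trans hrm' hGr'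
    have e1 : |G' - G| * G ≤ 11 * Δ * (r + β) := by
      have hsub : |G' - G| * G ≤ |G' - G| * (G + G') := by
        apply mul_le_mul_of_nonneg_left _ (abs_nonneg _)
        linarith
      linarith [hGG']
    have e3 : |G' - G| * μ ≤ 11 * Δ * G := by
      have e2 : (|G' - G| * G) * (μ * (r + β)) ≤ (11 * Δ * (r + β)) * G ^ 2 :=
        mul_le_mul e1 hGμ (mul_nonneg hμ.le (by linarith))
          (by positivity)
      have e2' : (|G' - G| * μ) * (G * (r + β)) ≤ (11 * Δ * G) * (G * (r + β)) := by
        have q1 : (|G' - G| * G) * (μ * (r + β)) = (|G' - G| * μ) * (G * (r + β)) := by ring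
        have q2 : (11 * Δ * (r + β)) * G ^ 2 = (11 * Δ * G) * (G * (r + β)) := by ring
        linarith [e2]
      exact le_of_mul_le_mul_right e2' (mul_pos hG0 (by linarith))
    have e4 : |m'| * |G' - G| * μ ≤ 11 * Δ * (G * G') := by
      calc |m'| * |G' - G| * μ = |m'| * (|G' - G| * μ) := by ring
        _ ≤ G' * (|G' - G| * μ) :=
            mul_le_mul_of_nonneg_right hm'G (mul_nonneg (abs_nonneg _) hμ.le)
        _ ≤ G' * (11 * Δ * G) := mul_le_mul_of_nonneg_left e3 hG0'.le
        _ = 11 * Δ * (G * G') := by ring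
    calc |m'| * |G' - G| * (Real.sqrt 2 * μ) = Real.sqrt 2 * (|m'| * |G' - G| * μ) := by ring
      _ ≤ Real.sqrt 2 * (11 * Δ * (G * G')) := mul_le_mul_of_nonneg_left e4 hs2.le
      _ = 11 * Δ * (Real.sqrt 2 * (G * G')) := by ring
  calc |Ffun β m - Ffun β' m'| ≤ |(m - m') / (Real.sqrt 2 * G)| +
        |m' * (G' - G) / (Real.sqrt 2 * (G * G'))| := by rw [hF]; exact abs_add_le _ _
    _ ≤ Δ / (Real.sqrt 2 * μ) + 11 * Δ / (Real.sqrt 2 * μ) := add_le_add hT1 hT2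
    _ ≤ 9 * Δ / μ := by
        rw [← add_div, div_le_div_iff₀ (mul_pos hs2 hμ) hμ]
        have h43 : (4/3 : ℝ) ≤ Real.sqrt 2 := by
          nlinarith [Real.sq_sqrt (show (0:ℝ) ≤ 2 by norm_num), Real.sqrt_nonneg 2]
        have h12 : (12:ℝ) * (Δ * μ) ≤ 9 * Real.sqrt 2 * (Δ * μ) :=
          mul_le_mul_of_nonneg_right (by linarith) (mul_nonneg hΔ0 hμ.le)
        have q1 : (Δ + 11 * Δ) * μ = 12 * (Δ * μ) := by ring
        have q2 : 9 * Δ * (Real.sqrt 2 * μ) = 9 * Real.sqrt 2 * (Δ * μ) := by ring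
        linarith

lemma ratio_eq (P : Measure Ω) (X : ℕ → Ω → ℤ × ℤ) (lam θ : ℝ) (hl : 0 < lam)
    (he : 0 < EX2sq P X) (hβ : 0 < 1 - lam + lam * Bfun P X θ) :
    btil P X lam θ / Real.sqrt (atil P X lam θ ^ 2 + btil P X lam θ ^ 2)
      = Ffun (1 - lam + lam * Bfun P X θ) (lam * Dfun P X θ) := by
  set e := EX2sq P X with hedef
  set β := 1 - lam + lam * Bfun P X θ with hβdef
  set δ := Dfun P X θ with hδdef
  have he0 : e ≠ 0 := he.ne'
  have hl0 : lam ≠ 0 := hl.ne'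
  set c : ℝ := 8 / (lam * e) with hcdef
  have hc : 0 < c := by positivity
  have hS : 4 * Bcoef P X lam θ - Acoef P X θ ^ 2 + Ccoef P X θ ^ 2 = c * β := by
    rw [hcdef, hβdef, Bcoef, Acoef, Ccoef, Bfun, ← hedef]
    field_simp
    ring
  have hT : 2 * Dcoef P X θ - Acoef P X θ * Ccoef P X θ = 4 / e * δ := by
    rw [hδdef, Dcoef, Acoef, Ccoef, Dfun, ← hedef]
    field_simp
    ring
  set m := lam * δ with hmdef
  set r := Real.sqrt (β ^ 2 + m ^ 2) with hrdef
  have hr2 : r ^ 2 = β ^ 2 + m ^ 2 := Real.sq_sqrt (by positivity)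
  have hr2' : r ^ 2 = β ^ 2 + lam ^ 2 * δ ^ 2 := by rw [hr2, hmdef]; ring
  have hrβ : β ≤ r := sqrt_ge_left' β m hβ.le
  have hr0 : 0 < r := lt_of_lt_of_le hβ hrβ
  have hβr : 0 < β + r := by linarith
  have hK : Kcoef P X lam θ = (c * r) ^ 2 := by
    rw [Kcoef, hS, hT]
    have h1 : (c * r) ^ 2 = c ^ 2 * (β ^ 2 + m ^ 2) := by rw [mul_pow, hr2]
    rw [h1, hcdef, hmdef]
    field_simp
    ring
  have hsK : Real.sqrt (Kcoef P X lam θ) = c * r := by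
    rw [hK, Real.sqrt_sq (mul_pos hc hr0).le]
  set w := Real.sqrt (c * (β + r)) with hwdef
  have hw2 : w ^ 2 = c * (β + r) := Real.sq_sqrt (mul_pos hc hβr).le
  have hw0 : 0 < w := Real.sqrt_pos.mpr (mul_pos hc hβr)
  set v := Real.sqrt (c * r) with hvdef
  have hv2 : v ^ 2 = c * r := Real.sq_sqrt (mul_pos hc hr0).le
  have hv0 : 0 < v := Real.sqrt_pos.mpr (mul_pos hc hr0)
  set g := Real.sqrt (r * (r + β)) with hgdef
  have hg0 : 0 < g := Real.sqrt_pos.mpr (mul_pos hr0 (by linarith))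
  have hvg : v * g = r * w := by
    rw [hvdef, hgdef, ← Real.sqrt_mul (mul_pos hc hr0).le, hwdef,
      show c * r * (r * (r + β)) = r ^ 2 * (c * (β + r)) by ring,
      Real.sqrt_mul (sq_nonneg r), Real.sqrt_sq hr0.le]
  have hpc : lam * e * (c * r) = 8 * r := by rw [hcdef]; field_simp
  have hatil : atil P X lam θ = Real.sqrt 2 / (8 * r) * w := by
    rw [atil, hsK, hS, ← hedef, hpc, show c * β + c * r = c * (β + r) by ring, ← hwdef]
  have hbtil : btil P X lam θ = Real.sqrt 2 * δ / (e * r * w) := by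
    rw [btil, hsK, hS, hT, ← hedef, hpc, show c * β + c * r = c * (β + r) by ring, ← hwdef]
    field_simp
    ring
  have hs2 : (Real.sqrt 2) ^ 2 = 2 := Real.sq_sqrt (by norm_num)
  have hs20 : (0:ℝ) < Real.sqrt 2 := by positivity
  clear_value e β δ c m r w v g
  have ha2 : atil P X lam θ ^ 2 = (β + r) / (4 * lam * e * r ^ 2) := by
    rw [hatil, mul_pow, div_pow, hs2, hw2, hcdef]
    field_simp
    ring
  have hb2 : btil P X lam θ ^ 2 = lam * δ ^ 2 / (4 * e * r ^ 2 * (β + r)) := by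
    rw [hbtil, div_pow, mul_pow, hs2,
      show (e * r * w) ^ 2 = e ^ 2 * r ^ 2 * w ^ 2 by ring, hw2, hcdef]
    field_simp
    ring
  have hsum : atil P X lam θ ^ 2 + btil P X lam θ ^ 2 = (2 / (lam * e * v)) ^ 2 := by
    rw [ha2, hb2, div_pow, show (lam * e * v) ^ 2 = lam ^ 2 * e ^ 2 * v ^ 2 by ring,
      hv2, hcdef]
    field_simp
    linear_combination (-8) * hr2'
  have hssum : Real.sqrt (atil P X lam θ ^ 2 + btil P X lam θ ^ 2) = 2 / (lam * e * v) := by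
    rw [hsum, Real.sqrt_sq (by positivity)]
  rw [hssum, hbtil, Ffun, ← hrdef, ← hgdef]
  rw [div_div_eq_mul_div]
  rw [div_eq_div_iff (by norm_num : (2:ℝ) ≠ 0) (mul_pos hs20 hg0).ne']
  rw [hmdef]
  field_simp
  linear_combination (2 * δ) * hvg + (δ * v * g) * hs2

lemma target_eq (lam c₁ c₂ s θ : ℝ) (hθ : θ ≠ 0) :
    lam * c₂ * s * (θ / |θ|) / (Real.sqrt 2 * Qlam c₁ c₂ lam s)
      = Ffun (1 - lam + lam * c₁ * s) (lam * c₂ * s * (θ / |θ|)) := by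
  have habs : |θ| ≠ 0 := abs_ne_zero.mpr hθ
  have hm2 : (lam * c₂ * s * (θ / |θ|)) ^ 2 = (lam * c₂ * s) ^ 2 := by
    have h1 : (θ / |θ|) ^ 2 = 1 := by rw [div_pow, sq_abs]; field_simp
    rw [mul_pow, h1, mul_one]
  rw [Ffun, hm2, Qlam]
  set β := 1 - lam + lam * c₁ * s
  set R := Real.sqrt (β ^ 2 + (lam * c₂ * s) ^ 2) with hRdef
  have hR2 : R ^ 2 = β ^ 2 + (lam * c₂ * s) ^ 2 := Real.sq_sqrt (by positivity)
  congr 2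
  rw [show R * (R + β) = R ^ 2 + β * R by ring, hR2]

theorem btil_ratio_approx
    (P : Measure Ω) [IsProbabilityMeasure P] (X : ℕ → Ω → ℤ × ℤ)
    (hX2sq : Integrable (fun ω => ((X 0 ω).2 : ℝ) ^ 2) P)
    (hpos : 0 < EX2sq P X)
    (α ε c₁ c₂ : ℝ) (hα : α ∈ Set.Ioc (0 : ℝ) 2) (hε : 0 < ε) (hc₁ : 0 < c₁) (hc₂ : 0 < c₂)
    (hA1B : (fun θ : ℝ => Bfun P X θ - c₁ * |θ| ^ α) =O[nhdsWithin (0 : ℝ) {0}ᶜ]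
      fun θ : ℝ => |θ| ^ (α + ε))
    (hA1D : (fun θ : ℝ => Dfun P X θ - c₂ * |θ| ^ α * (θ / |θ|)) =O[nhdsWithin (0 : ℝ) {0}ᶜ]
      fun θ : ℝ => |θ| ^ (α + ε))
    :
    ∃ c₉ : ℝ, 0 < c₉ ∧ ∃ sS : ℝ, 0 < sS ∧
      ∀ lam ∈ Set.Ioo (1 / 2 : ℝ) 1, ∀ θ₁ : ℝ, 0 < |θ₁| → |θ₁| ≤ sS →
        |btil P X lam θ₁ / Real.sqrt (atil P X lam θ₁ ^ 2 + btil P X lam θ₁ ^ 2) -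
            lam * c₂ * |θ₁| ^ α * (θ₁ / |θ₁|) / (Real.sqrt 2 * Qlam c₁ c₂ lam (|θ₁| ^ α))| ≤
          c₉ * |θ₁| ^ ε := by
  obtain ⟨CB, hCB⟩ := hA1B.bound
  obtain ⟨CD, hCD⟩ := hA1D.bound
  rw [eventually_nhdsWithin_iff, Metric.eventually_nhds_iff] at hCB hCD
  obtain ⟨sB, hsB0, hCB⟩ := hCB
  obtain ⟨sD, hsD0, hCD⟩ := hCD
  set C0 : ℝ := |CB| + |CD| + 1 with hC0def
  have hC00 : 0 < C0 := by positivity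
  refine ⟨36 * C0 / c₂, by positivity, ?_⟩
  set x : ℝ := min c₁ c₂ / (4 * C0) with hxdef
  have hx0 : 0 < x := by
    apply div_pos (lt_min hc₁ hc₂) (by positivity)
  refine ⟨min (min (sB / 2) (sD / 2)) (x ^ (1 / ε)), by positivity, ?_⟩
  intro lam hlam θ hθpos hθle
  obtain ⟨hlam1, hlam2⟩ := hlam
  have hθ0 : θ ≠ 0 := fun h => by simp [h] at hθpos
  set t := |θ| with htdef
  set s := t ^ α with hsdef
  have ht0 : 0 < t := hθpos
  have hs0 : 0 < s := Real.rpow_pos_of_pos ht0 α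
  have hεC : C0 * t ^ ε ≤ min c₁ c₂ / 4 := by
    have h1 : t ^ ε ≤ x := by
      have h2 : t ≤ x ^ (1 / ε) := le_trans hθle (min_le_right _ _)
      have h3 : t ^ ε ≤ (x ^ (1 / ε)) ^ ε := Real.rpow_le_rpow ht0.le h2 hε.le
      rwa [← Real.rpow_mul hx0.le, one_div_mul_cancel hε.ne', Real.rpow_one] at h3
    calc C0 * t ^ ε ≤ C0 * x := mul_le_mul_of_nonneg_left h1 hC00.le
      _ = min c₁ c₂ / 4 := by rw [hxdef]; field_simp
  -- big-O bounds at θ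
  have hmem : θ ∈ ({0}ᶜ : Set ℝ) := by simpa using hθ0
  have hdB : dist θ 0 < sB := by
    rw [Real.dist_eq, sub_zero]
    calc |θ| ≤ min (min (sB / 2) (sD / 2)) (x ^ (1 / ε)) := hθle
      _ ≤ sB / 2 := le_trans (min_le_left _ _) (min_le_left _ _)
      _ < sB := by linarith
  have hdD : dist θ 0 < sD := by
    rw [Real.dist_eq, sub_zero]
    calc |θ| ≤ min (min (sB / 2) (sD / 2)) (x ^ (1 / ε)) := hθle
      _ ≤ sD / 2 := le_trans (min_le_left _ _) (min_le_right _ _)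
      _ < sD := by linarith
  have hBbd : |Bfun P X θ - c₁ * s| ≤ C0 * t ^ (α + ε) := by
    have h := hCB hdB hmem
    rw [Real.norm_eq_abs, Real.norm_eq_abs, abs_of_nonneg (Real.rpow_nonneg (abs_nonneg θ) _)] at h
    calc |Bfun P X θ - c₁ * s| ≤ CB * t ^ (α + ε) := h
      _ ≤ C0 * t ^ (α + ε) := by
          apply mul_le_mul_of_nonneg_right _ (Real.rpow_nonneg ht0.le _)
          rw [hC0def]; cases' abs_cases CB with h h <;> cases' abs_cases CD with h2 h2 <;> linarith [abs_nonneg CB, abs_nonneg CD, le_abs_self CB]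
  have hDbd : |Dfun P X θ - c₂ * s * (θ / |θ|)| ≤ C0 * t ^ (α + ε) := by
    have h := hCD hdD hmem
    rw [Real.norm_eq_abs, Real.norm_eq_abs, abs_of_nonneg (Real.rpow_nonneg (abs_nonneg θ) _)] at h
    calc |Dfun P X θ - c₂ * s * (θ / |θ|)| ≤ CD * t ^ (α + ε) := h
      _ ≤ C0 * t ^ (α + ε) := by
          apply mul_le_mul_of_nonneg_right _ (Real.rpow_nonneg ht0.le _)
          rw [hC0def]; cases' abs_cases CD with h2 h2 <;> linarith [abs_nonneg CB, le_abs_self CD]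
  set Δ : ℝ := C0 * t ^ (α + ε) with hΔdef
  set μ : ℝ := c₂ * s / 4 with hμdef
  have hμ0 : 0 < μ := by rw [hμdef]; positivity
  have htsplit : t ^ (α + ε) = s * t ^ ε := by
    rw [hsdef, ← Real.rpow_add ht0]
  have hΔμ : Δ ≤ μ := by
    rw [hΔdef, hμdef, htsplit]
    calc C0 * (s * t ^ ε) = (C0 * t ^ ε) * s := by ring
      _ ≤ (min c₁ c₂ / 4) * s := mul_le_mul_of_nonneg_right hεC hs0.le
      _ ≤ (c₂ / 4) * s := by
          apply mul_le_mul_of_nonneg_right _ hs0.le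
          have := min_le_right c₁ c₂; linarith
      _ = c₂ * s / 4 := by ring
  have hΔc₁ : Δ ≤ c₁ * s / 4 := by
    rw [hΔdef, htsplit]
    calc C0 * (s * t ^ ε) = (C0 * t ^ ε) * s := by ring
      _ ≤ (min c₁ c₂ / 4) * s := mul_le_mul_of_nonneg_right hεC hs0.le
      _ ≤ (c₁ / 4) * s := by
          apply mul_le_mul_of_nonneg_right _ hs0.le
          have := min_le_left c₁ c₂; linarith
      _ = c₁ * s / 4 := by ring
  set β := 1 - lam + lam * Bfun P X θ with hβdef
  set β' := 1 - lam + lam * c₁ * s with hβ'def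
  set m := lam * Dfun P X θ with hmdef
  set m' := lam * c₂ * s * (θ / |θ|) with hm'def
  have hβd : |β - β'| ≤ Δ := by
    rw [hβdef, hβ'def, show 1 - lam + lam * Bfun P X θ - (1 - lam + lam * c₁ * s)
      = lam * (Bfun P X θ - c₁ * s) by ring, abs_mul, abs_of_pos (by linarith : (0:ℝ) < lam)]
    calc lam * |Bfun P X θ - c₁ * s| ≤ 1 * |Bfun P X θ - c₁ * s| := by
          apply mul_le_mul_of_nonneg_right (by linarith) (abs_nonneg _)
      _ = |Bfun P X θ - c₁ * s| := one_mul _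
      _ ≤ Δ := hBbd
  have hmd : |m - m'| ≤ Δ := by
    rw [hmdef, hm'def, show lam * Dfun P X θ - lam * c₂ * s * (θ / |θ|)
      = lam * (Dfun P X θ - c₂ * s * (θ / |θ|)) by ring, abs_mul,
      abs_of_pos (by linarith : (0:ℝ) < lam)]
    calc lam * |Dfun P X θ - c₂ * s * (θ / |θ|)| ≤ 1 * |Dfun P X θ - c₂ * s * (θ / |θ|)| := by
          apply mul_le_mul_of_nonneg_right (by linarith) (abs_nonneg _)
      _ = |Dfun P X θ - c₂ * s * (θ / |θ|)| := one_mul _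
      _ ≤ Δ := hDbd
  have hsgn : abs (θ / |θ|) = 1 := by
    rw [abs_div, abs_abs, div_self (abs_ne_zero.mpr hθ0)]
  have hm'abs : |m'| = lam * (c₂ * s) := by
    rw [hm'def, abs_mul, hsgn, mul_one, abs_of_pos (by positivity : (0:ℝ) < lam * c₂ * s)]
    ring
  have hm'μ : μ ≤ |m'| := by
    rw [hm'abs, hμdef]
    nlinarith [hs0, hc₂]
  have hmμ : μ ≤ |m| := by
    have h1 : |m'| - |m| ≤ |m' - m| := abs_sub_abs_le_abs_sub m' m
    have h2 : |m' - m| ≤ Δ := by rw [abs_sub_comm]; exact hmd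
    have h3 : lam * (c₂ * s) - Δ ≥ c₂ * s / 2 - c₂ * s / 4 := by
      nlinarith [hs0, hc₂, hΔμ]
    rw [hμdef]
    rw [hm'abs] at h1
    linarith
  have hβ'pos : 0 < β' := by
    rw [hβ'def]
    nlinarith [hs0, hc₁]
  have hβpos : 0 < β := by
    have h1 : β' - β ≤ Δ := by have := (abs_le.mp hβd).1; linarith
    have h2 : lam * (c₁ * s) ≤ β' - (1 - lam) := by rw [hβ'def]; ring_nf; linarith [le_refl (lam*c₁*s)]
    have h3 : c₁ * s / 2 ≤ lam * (c₁ * s) := by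
      have := mul_le_mul_of_nonneg_right hlam1.le (mul_pos hc₁ hs0).le
      linarith
    have h4 : 1 - lam > 0 := by linarith
    nlinarith [hΔc₁]
  -- apply lemmas
  have hlam0 : 0 < lam := by linarith
  have hLHS : btil P X lam θ / Real.sqrt (atil P X lam θ ^ 2 + btil P X lam θ ^ 2)
      = Ffun β m := ratio_eq P X lam θ hlam0 hpos hβpos
  have hRHS : lam * c₂ * s * (θ / |θ|) / (Real.sqrt 2 * Qlam c₁ c₂ lam s) = Ffun β' m' :=
    target_eq lam c₁ c₂ s θ hθ0
  rw [hLHS, hRHS]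
  have hlip := Ffun_lip β β' m m' μ Δ hβpos hβ'pos hμ0 hmμ hm'μ hβd hmd hΔμ
  calc |Ffun β m - Ffun β' m'| ≤ 9 * Δ / μ := hlip
    _ = 36 * C0 / c₂ * t ^ ε := by
        rw [hΔdef, hμdef, htsplit]
        field_simp
        ring

end
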